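/- There exists a constant C, depending only on ρ₀, such that for all integers k ≥ 0 and all i with ⌊(k+1)/2⌋ + 1 ≤ i ≤ k+1 and i ≥ 2, ((k+1)!/(i!(k+1−i)!)) · (k+1)^{−1/2} · L_{ρ,k}/(H_{ρ,2,i−2}·H_{ρ,3,k+2−i}) ≤ C/(k+3−i). -/
import Mathlib


open MeasureTheory Real Filter

noncomputable section

namespace HypP

/-- Japanese bracket `⟨y⟩ = (1+y²)^{1/2}`. -/
def br (y : ℝ) : ℝ := Real.sqrt (1 + y ^ 2)

/-- Weighting a function of `(x,y)` by `⟨y⟩^e`. -/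
def wt (e : ℝ) (g : ℝ → ℝ → ℝ) : ℝ → ℝ → ℝ := fun x y => br y ^ e * g x y

/-- `m`-th tangential derivative `∂ₓ^m`. -/
def Dx (m : ℕ) (g : ℝ → ℝ → ℝ) : ℝ → ℝ → ℝ :=
  fun x y => iteratedDeriv m (fun x' => g x' y) x

/-- `k`-th normal derivative `∂_y^k`. -/
def Dy (k : ℕ) (g : ℝ → ℝ → ℝ) : ℝ → ℝ → ℝ :=
  fun x y => iteratedDeriv k (fun y' => g x y') y

/-- Squared `L²` norm on the half-plane `ℝ × (0,∞)`. -/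
def sqL2 (g : ℝ → ℝ → ℝ) : ℝ := ∫ x : ℝ, ∫ y in Set.Ioi (0 : ℝ), (g x y) ^ 2

/-- `L²` inner product on the half-plane. -/
def ipL2 (f g : ℝ → ℝ → ℝ) : ℝ := ∫ x : ℝ, ∫ y in Set.Ioi (0 : ℝ), f x y * g x y

/-- Squared `L²ₓL^∞_y` norm on the half-plane. -/
def sqL2xLinfy (g : ℝ → ℝ → ℝ) : ℝ :=
  ∫ x : ℝ, (sSup ((fun y => |g x y|) '' Set.Ioi (0 : ℝ))) ^ 2

/-- The weight `H_{ρ,m,k}`. -/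
def Hc (ρ : ℝ) (m k : ℕ) : ℝ :=
  ρ ^ (m + k + 1) * ((m : ℝ) + (k : ℝ) + 1) ^ 9 /
    (((m + k).factorial : ℝ) * Real.sqrt (m.factorial : ℝ))

/-- The weight `N_{ρ,m} = H_{ρ,m,0}`. -/
def Nc (ρ : ℝ) (m : ℕ) : ℝ := Hc ρ m 0

/-- The weight `L_{ρ,k} = H_{ρ,1,k}`. -/
def Lc (ρ : ℝ) (k : ℕ) : ℝ := Hc ρ 1 k

/-- Squared anisotropic Gevrey norm `‖h‖²_{G^{3/2,1}_{ρ,ℓ}}`. -/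
def gevSq (ρ ℓ : ℝ) (h : ℝ → ℝ → ℝ) : ℝ :=
  (∑' m : ℕ, (Nc ρ m * Real.sqrt (sqL2 (wt (ℓ - 1) (Dx m h)))) ^ 2)
  + ∑' m : ℕ, ∑' k : ℕ,
      (((m : ℝ) + 1) * Hc ρ (m + 1) k *
        Real.sqrt (sqL2 (wt ℓ (Dx m (Dy (k + 1) h))))) ^ 2

/-- Anisotropic Gevrey norm. -/
def gevNorm (ρ ℓ : ℝ) (h : ℝ → ℝ → ℝ) : ℝ := Real.sqrt (gevSq ρ ℓ h)

/-- Membership in the anisotropic Gevrey space `G^{3/2,1}_{ρ,ℓ}`. -/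
def InGev (ρ ℓ : ℝ) (h : ℝ → ℝ → ℝ) : Prop :=
  Summable (fun m : ℕ => (Nc ρ m * Real.sqrt (sqL2 (wt (ℓ - 1) (Dx m h)))) ^ 2) ∧
  Summable (fun p : ℕ × ℕ =>
    (((p.1 : ℝ) + 1) * Hc ρ (p.1 + 1) p.2 *
      Real.sqrt (sqL2 (wt ℓ (Dx p.1 (Dy (p.2 + 1) h))))) ^ 2)

/-- Time derivative `∂ₜ`. -/
def pt (u : ℝ → ℝ → ℝ → ℝ) : ℝ → ℝ → ℝ → ℝ := fun t x y => deriv (fun s => u s x y) t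

/-- Tangential derivative `∂ₓ` (time-dependent functions). -/
def px (u : ℝ → ℝ → ℝ → ℝ) : ℝ → ℝ → ℝ → ℝ := fun t x y => deriv (fun x' => u t x' y) x

/-- Normal derivative `∂_y` (time-dependent functions). -/
def py (u : ℝ → ℝ → ℝ → ℝ) : ℝ → ℝ → ℝ → ℝ := fun t x y => deriv (fun y' => u t x y') y

/-- The normal velocity `v(t,x,y) = -∫₀^y ∂ₓu(t,x,ỹ) dỹ`. -/
def vv (u : ℝ → ℝ → ℝ → ℝ) : ℝ → ℝ → ℝ → ℝ :=
  fun t x y => -∫ s in (0 : ℝ)..y, px u t x s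

/-- The auxiliary function `φ = ∂ₜu + u∂ₓu + v∂_yu`. -/
def phi (u : ℝ → ℝ → ℝ → ℝ) : ℝ → ℝ → ℝ → ℝ :=
  fun t x y => pt u t x y + u t x y * px u t x y + vv u t x y * py u t x y

/-- `u` solves the 2D hyperbolic Prandtl system on `[0,T]`, with the no-slip boundary
condition and decay of `u` at `y → ∞`. -/
def Solves (u : ℝ → ℝ → ℝ → ℝ) (T : ℝ) : Prop :=
  (∀ t ∈ Set.Icc (0 : ℝ) T, ∀ x : ℝ, ∀ y ∈ Set.Ioi (0 : ℝ),
      pt (pt u) t x y + pt u t x y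
        + u t x y * px u t x y + vv u t x y * py u t x y
        + pt (fun t' x' y' => u t' x' y' * px u t' x' y' + vv u t' x' y' * py u t' x' y') t x y
        - py (py u) t x y = 0)
  ∧ (∀ t ∈ Set.Icc (0 : ℝ) T, ∀ x : ℝ, u t x 0 = 0)
  ∧ (∀ t ∈ Set.Icc (0 : ℝ) T, ∀ x : ℝ, Tendsto (fun y => u t x y) atTop (nhds 0))

/-- `U` is the auxiliary function `𝒰` solving
`(∂ₜ + u∂ₓ + v∂_y)∫₀^y 𝒰 dỹ = -∂ₓv`, `𝒰|_{t=0} = 0`. -/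
def AuxU (u U : ℝ → ℝ → ℝ → ℝ) (T : ℝ) : Prop :=
  (∀ t ∈ Set.Icc (0 : ℝ) T, ∀ x : ℝ, ∀ y ∈ Set.Ioi (0 : ℝ),
      pt (fun t' x' y' => ∫ s in (0 : ℝ)..y', U t' x' s) t x y
        + u t x y * px (fun t' x' y' => ∫ s in (0 : ℝ)..y', U t' x' s) t x y
        + vv u t x y * py (fun t' x' y' => ∫ s in (0 : ℝ)..y', U t' x' s) t x y
        = -px (vv u) t x y)
  ∧ (∀ x : ℝ, ∀ y : ℝ, U 0 x y = 0)

/-- The auxiliary function `λ = ∂ₓu - (∂_yu)∫₀^y 𝒰 dỹ`. -/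
def lam (u U : ℝ → ℝ → ℝ → ℝ) : ℝ → ℝ → ℝ → ℝ :=
  fun t x y => px u t x y - py u t x y * ∫ s in (0 : ℝ)..y, U t x s

/-- `|a|²_{X_ρ}` for a time slice `a = (us, Us, ls, fs)` of `(u, 𝒰, λ, φ)`. -/
def Xsq (ρ ℓ : ℝ) (us Us ls fs : ℝ → ℝ → ℝ) : ℝ :=
  (∑' m : ℕ, (Nc ρ (m + 1)) ^ 2 * sqL2 (Dx m Us))
  + (∑' m : ℕ, ((m : ℝ) + 1) * (Nc ρ (m + 1)) ^ 2 * sqL2 (wt (ℓ - 1) (Dx m ls)))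
  + ∑' m : ℕ, ∑' k : ℕ, ((m : ℝ) + 1) ^ 2 * (Hc ρ (m + 1) k) ^ 2 *
      (sqL2 (wt ℓ (Dx m (Dy k fs))) + sqL2 (wt ℓ (Dx m (Dy (k + 1) us))))

/-- `|a|²_{Y_ρ}` for a time slice `a = (us, Us, ls, fs)` of `(u, 𝒰, λ, φ)`. -/
def Ysq (ρ ℓ : ℝ) (us Us ls fs : ℝ → ℝ → ℝ) : ℝ :=
  (∑' m : ℕ, ((m : ℝ) + 1) * (Nc ρ (m + 1)) ^ 2 * sqL2 (Dx m Us))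
  + (∑' m : ℕ, ((m : ℝ) + 1) ^ 2 * (Nc ρ (m + 1)) ^ 2 * sqL2 (wt (ℓ - 1) (Dx m ls)))
  + ∑' m : ℕ, ∑' k : ℕ, ((m : ℝ) + (k : ℝ) + 1) * ((m : ℝ) + 1) ^ 2 * (Hc ρ (m + 1) k) ^ 2 *
      (sqL2 (wt ℓ (Dx m (Dy k fs))) + sqL2 (wt ℓ (Dx m (Dy (k + 1) us))))

/-- `|a|_{X_ρ}`. -/
def Xnorm (ρ ℓ : ℝ) (us Us ls fs : ℝ → ℝ → ℝ) : ℝ := Real.sqrt (Xsq ρ ℓ us Us ls fs)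

/-- `|a|_{Y_ρ}`. -/
def Ynorm (ρ ℓ : ℝ) (us Us ls fs : ℝ → ℝ → ℝ) : ℝ := Real.sqrt (Ysq ρ ℓ us Us ls fs)

end HypP

open HypP

set_option maxHeartbeats 1000000 in
/-- estimate (4.10): for `⌊(k+1)/2⌋ + 1 ≤ i ≤ k+1`, `i ≥ 2`,
`((k+1)!/(i!(k+1−i)!)) (k+1)^{-1/2} L_{ρ,k}/(H_{ρ,2,i−2}H_{ρ,3,k+2−i}) ≤ C/(k+3−i)`. -/
theorem weight_estimate_fe4 (ρ₀ : ℝ) (hρ₀ : 0 < ρ₀) :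
    ∃ C : ℝ, 0 < C ∧
      ∀ ρ : ℝ, (Real.exp 1)⁻¹ * ρ₀ ≤ ρ → ρ ≤ ρ₀ →
        ∀ k i : ℕ, (k + 1) / 2 + 1 ≤ i → i ≤ k + 1 → 2 ≤ i →
          ((k + 1).factorial : ℝ) / ((i.factorial : ℝ) * ((k + 1 - i).factorial : ℝ))
              * (Real.sqrt ((k : ℝ) + 1))⁻¹
              * (Lc ρ k / (Hc ρ 2 (i - 2) * Hc ρ 3 (k + 2 - i)))
            ≤ C / ((k : ℝ) + 3 - (i : ℝ)) := by
  refine ⟨4 * 2 ^ 9 * Real.exp 1 ^ 5 * ρ₀⁻¹ ^ 5, by positivity, ?_⟩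
  intro ρ hρl hρu k i hi1 hi2 hi3
  have hρ : 0 < ρ := lt_of_lt_of_le (by positivity) hρl
  obtain ⟨j, rfl⟩ : ∃ j, i = j + 2 := ⟨i - 2, by omega⟩
  obtain ⟨l, rfl⟩ : ∃ l, k = j + l + 1 := ⟨k - j - 1, by omega⟩
  have hl : l ≤ j + 1 := by omega
  have e1 : j + l + 1 + 2 - (j + 2) = l + 1 := by omega
  have e2 : j + l + 1 + 1 - (j + 2) = l := by omega
  have e3 : j + 2 - 2 = j := by omega
  have e4 : j + l + 1 + 1 = j + l + 2 := by omega
  have ed : ((j + l + 1 : ℕ) : ℝ) + 3 - ((j + 2 : ℕ) : ℝ) = (l : ℝ) + 2 := by push_cast; ring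
  have esq : ((j + l + 1 : ℕ) : ℝ) + 1 = (j : ℝ) + (l : ℝ) + 2 := by push_cast; ring
  rw [e1, e2, e3, e4, ed, esq]
  simp only [Lc, Hc]
  have e5 : 1 + (j + l + 1) = j + l + 2 := by omega
  have e6 : 2 + j = j + 2 := by omega
  have e7 : 3 + (l + 1) = l + 4 := by omega
  rw [e5, e6, e7]
  have s1 : ((Nat.factorial 1 : ℕ) : ℝ) = 1 := by norm_num [Nat.factorial]
  have s2 : ((Nat.factorial 2 : ℕ) : ℝ) = 2 := by norm_num [Nat.factorial]
  have s3 : ((Nat.factorial 3 : ℕ) : ℝ) = 6 := by norm_num [Nat.factorial]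
  rw [s1, s2, s3, Real.sqrt_one]
  push_cast
  have hfacn : (l + 4).factorial = (l + 1) * (l + 2) * (l + 3) * (l + 4) * l.factorial := by
    rw [show l + 4 = (l + 3) + 1 from rfl, Nat.factorial_succ,
        show l + 3 = (l + 2) + 1 from rfl, Nat.factorial_succ,
        show l + 2 = (l + 1) + 1 from rfl, Nat.factorial_succ, Nat.factorial_succ]
    ring
  have hjl : (0:ℝ) ≤ (j:ℝ) := Nat.cast_nonneg j
  have hll : (0:ℝ) ≤ (l:ℝ) := Nat.cast_nonneg l
  have hF0 : (0:ℝ) < ((j + l + 2).factorial : ℝ) := by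
    exact_mod_cast Nat.factorial_pos _
  have hF1 : (0:ℝ) < ((j + 2).factorial : ℝ) := by exact_mod_cast Nat.factorial_pos _
  have hF2 : (0:ℝ) < ((l).factorial : ℝ) := by exact_mod_cast Nat.factorial_pos _
  have hsq : (0:ℝ) < Real.sqrt ((j:ℝ) + (l:ℝ) + 2) := Real.sqrt_pos.mpr (by linarith)
  have h2p : (0:ℝ) < Real.sqrt 2 := Real.sqrt_pos.mpr (by norm_num)
  have h6p : (0:ℝ) < Real.sqrt 6 := Real.sqrt_pos.mpr (by norm_num)
  have key : ((j + l + 2).factorial : ℝ) / (((j + 2).factorial : ℝ) * ((l).factorial : ℝ)) *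
        (Real.sqrt ((j:ℝ) + (l:ℝ) + 2))⁻¹ *
      (ρ ^ (j + l + 2 + 1) * (1 + ((j:ℝ) + (l:ℝ) + 1) + 1) ^ 9 / (((j + l + 2).factorial : ℝ) * 1) /
        (ρ ^ (j + 2 + 1) * (2 + (j:ℝ) + 1) ^ 9 / (((j + 2).factorial : ℝ) * Real.sqrt 2) *
          (ρ ^ (l + 4 + 1) * (3 + ((l:ℝ) + 1) + 1) ^ 9 / (((l + 4).factorial : ℝ) * Real.sqrt 6))))
      = Real.sqrt 2 * Real.sqrt 6 * ρ⁻¹ ^ 5 * (Real.sqrt ((j:ℝ) + (l:ℝ) + 2))⁻¹ *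
          (((j:ℝ) + (l:ℝ) + 3) / ((j:ℝ) + 3)) ^ 9 *
          ((((l:ℝ) + 1) * ((l:ℝ) + 2) * ((l:ℝ) + 3) * ((l:ℝ) + 4)) / ((l:ℝ) + 5) ^ 9) := by
    rw [hfacn]
    push_cast
    have e8 : (1 + ((j:ℝ) + (l:ℝ) + 1) + 1) = ((j:ℝ) + (l:ℝ) + 3) := by ring
    have e9 : (2 + (j:ℝ) + 1) = ((j:ℝ) + 3) := by ring
    have e10 : (3 + ((l:ℝ) + 1) + 1) = ((l:ℝ) + 5) := by ring
    rw [e8, e9, e10]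
    have hB : (0:ℝ) < (j:ℝ) + 3 := by positivity
    have hCv : (0:ℝ) < (l:ℝ) + 5 := by positivity
    generalize ((j:ℝ) + (l:ℝ) + 3) = A
    generalize hBt : ((j:ℝ) + 3) = B at hB
    generalize hCt : ((l:ℝ) + 5) = Cv at hCv
    generalize hSt : Real.sqrt ((j:ℝ) + (l:ℝ) + 2) = S at hsq
    field_simp
    ring
  rw [key]
  have h46 : Real.sqrt 2 * Real.sqrt 6 ≤ 4 := by
    rw [← Real.sqrt_mul (by norm_num : (0:ℝ) ≤ 2)]
    nlinarith [Real.sq_sqrt (show (0:ℝ) ≤ 2 * 6 by norm_num), Real.sqrt_nonneg (2 * 6 : ℝ)]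
  have hρ5 : ρ⁻¹ ^ 5 ≤ Real.exp 1 ^ 5 * ρ₀⁻¹ ^ 5 := by
    have h1 : ρ⁻¹ ≤ Real.exp 1 * ρ₀⁻¹ := by
      have h2 : (Real.exp 1 * ρ₀⁻¹) = ((Real.exp 1)⁻¹ * ρ₀)⁻¹ := by
        rw [mul_inv, inv_inv]
      rw [h2]
      exact inv_anti₀ (by positivity) hρl
    calc ρ⁻¹ ^ 5 ≤ (Real.exp 1 * ρ₀⁻¹) ^ 5 := pow_le_pow_left₀ (by positivity) h1 5
      _ = Real.exp 1 ^ 5 * ρ₀⁻¹ ^ 5 := by rw [mul_pow]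
  have hS : (Real.sqrt ((j:ℝ) + (l:ℝ) + 2))⁻¹ ≤ 1 := by
    apply inv_le_one_of_one_le₀
    rw [show (1:ℝ) = Real.sqrt 1 from Real.sqrt_one.symm]
    exact Real.sqrt_le_sqrt (by linarith)
  have hR : (((j:ℝ) + (l:ℝ) + 3) / ((j:ℝ) + 3)) ^ 9 ≤ 2 ^ 9 := by
    apply pow_le_pow_left₀ (by positivity)
    rw [div_le_iff₀ (by positivity)]
    have hlc : (l:ℝ) ≤ (j:ℝ) + 1 := by exact_mod_cast hl
    linarith
  have hQ : (((l:ℝ) + 1) * ((l:ℝ) + 2) * ((l:ℝ) + 3) * ((l:ℝ) + 4)) / ((l:ℝ) + 5) ^ 9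
      ≤ 1 / ((l:ℝ) + 2) := by
    rw [div_le_div_iff₀ (by positivity) (by positivity)]
    calc ((l:ℝ) + 1) * ((l:ℝ) + 2) * ((l:ℝ) + 3) * ((l:ℝ) + 4) * ((l:ℝ) + 2)
        ≤ ((l:ℝ) + 5) * ((l:ℝ) + 5) * ((l:ℝ) + 5) * ((l:ℝ) + 5) * ((l:ℝ) + 5) := by
          gcongr <;> linarith
      _ = ((l:ℝ) + 5) ^ 5 := by ring
      _ ≤ ((l:ℝ) + 5) ^ 9 := pow_le_pow_right₀ (by linarith) (by norm_num)
      _ = 1 * ((l:ℝ) + 5) ^ 9 := by ring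
  calc Real.sqrt 2 * Real.sqrt 6 * ρ⁻¹ ^ 5 * (Real.sqrt ((j:ℝ) + (l:ℝ) + 2))⁻¹ *
          (((j:ℝ) + (l:ℝ) + 3) / ((j:ℝ) + 3)) ^ 9 *
          ((((l:ℝ) + 1) * ((l:ℝ) + 2) * ((l:ℝ) + 3) * ((l:ℝ) + 4)) / ((l:ℝ) + 5) ^ 9)
      ≤ 4 * (Real.exp 1 ^ 5 * ρ₀⁻¹ ^ 5) * 1 * 2 ^ 9 * (1 / ((l:ℝ) + 2)) := by
        exact mul_le_mul (mul_le_mul (mul_le_mul (mul_le_mul h46 hρ5 (by positivity)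
          (by norm_num)) hS (by positivity) (by positivity)) hR (by positivity)
          (by positivity)) hQ (by positivity) (by positivity)
    _ = 4 * 2 ^ 9 * Real.exp 1 ^ 5 * ρ₀⁻¹ ^ 5 / ((l:ℝ) + 2) := by ring
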